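/- Let N ≥ 1, let C : ℝ → M_N(ℂ) be continuous and 2π-periodic, and let ω ∈ ℝ be such that C(α) − ω²·I is invertible for every α. Fix M ≥ 0 and diagonal N×N complex matrices X_0, …, X_M such that I + X_m is invertible for each m. Define T^k(ω) := −(1/2π)∫₀^{2π} e^{ikα} C(α)(C(α) − ω²·I)^{-1} dα and T̃^k(ω) := (1/2π)∫₀^{2π} e^{ikα} (C(α) − ω²·I)^{-1} dα; let 𝒯(ω) and 𝒯̃(ω) be the (M+1)×(M+1) block matrices with (i,j) blocks T^{j−i}(ω) and T̃^{j−i}(ω) respectively; let 𝒳 be block-diagonal with blocks X_m and let 𝒴 be block-diagonal with blocks Y_m := (I + X_m)^{-1} − I. Then det(I − 𝒳𝒯(ω)) = det(I + 𝒳)·det(I − ω²𝒴𝒯̃(ω)); in particular, det(I − 𝒳𝒯(ω)) = 0 if and only if det(I − ω²𝒴𝒯̃(ω)) = 0. -/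

import Mathlib

open scoped Real

def stmt16blk {M N : ℕ} (f : Fin (M+1) → Matrix (Fin N) (Fin N) ℂ) :
    Matrix (Fin (M+1) × Fin N) (Fin (M+1) × Fin N) ℂ :=
  fun p q => if p.1 = q.1 then f p.1 p.2 q.2 else 0

lemma stmt16blk_mul {M N : ℕ} (f g : Fin (M+1) → Matrix (Fin N) (Fin N) ℂ) :
    stmt16blk f * stmt16blk g = stmt16blk (fun m => f m * g m) := by
  ext ⟨a, i⟩ ⟨b, j⟩
  simp only [Matrix.mul_apply, stmt16blk, Fintype.sum_prod_type, Matrix.mul_apply]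
  by_cases hab : a = b
  · subst hab
    rw [Finset.sum_eq_single a]
    · simp
    · intro m _ hm; simp [Ne.symm hm, hm]
    · simp
  · simp only [hab, if_false]
    rw [Finset.sum_eq_zero]
    intro m _
    by_cases h1 : a = m
    · subst h1; simp [hab]
    · simp [h1]

lemma stmt16blk_one {M N : ℕ} :
    stmt16blk (M := M) (N := N) (fun _ => 1) = 1 := by
  ext ⟨a, i⟩ ⟨b, j⟩
  simp only [stmt16blk, Matrix.one_apply, Prod.mk.injEq]
  by_cases hab : a = b <;> by_cases hij : i = j <;> simp [hab, hij]

theorem stmt_16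
    (N : ℕ) (hN : 1 ≤ N)
    (C : ℝ → Matrix (Fin N) (Fin N) ℂ)
    (hC_cont : Continuous C)
    (hC_per : Function.Periodic C (2 * π))
    (ω : ℝ)
    (hω : ∀ α : ℝ, IsUnit (C α - ((ω : ℂ) ^ 2) • (1 : Matrix (Fin N) (Fin N) ℂ)))
    (M : ℕ)
    (X : ℤ → Matrix (Fin N) (Fin N) ℂ)
    (hX_diag : ∀ m : ℤ, (X m).IsDiag)
    (hX_supp : ∀ m : ℤ, (m < 0 ∨ (M : ℤ) < m) → X m = 0)
    (hX_inv : ∀ m : ℤ, IsUnit (1 + X m))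
    (T Ttilde : ℤ → Matrix (Fin N) (Fin N) ℂ)
    (hT : ∀ (k : ℤ) (i j : Fin N),
      T k i j = -((1 / (2 * π)) * ∫ α in (0:ℝ)..(2 * π),
        Complex.exp (Complex.I * (k : ℂ) * (α : ℂ)) *
          ((C α) * (C α - ((ω : ℂ) ^ 2) • (1 : Matrix (Fin N) (Fin N) ℂ))⁻¹) i j))
    (hTtilde : ∀ (k : ℤ) (i j : Fin N),
      Ttilde k i j = (1 / (2 * π)) * ∫ α in (0:ℝ)..(2 * π),
        Complex.exp (Complex.I * (k : ℂ) * (α : ℂ)) *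
          ((C α - ((ω : ℂ) ^ 2) • (1 : Matrix (Fin N) (Fin N) ℂ))⁻¹) i j)
    (𝒯 𝒯tilde 𝒳 𝒴 : Matrix (Fin (M+1) × Fin N) (Fin (M+1) × Fin N) ℂ)
    (h𝒯 : ∀ p q : Fin (M+1) × Fin N,
      𝒯 p q = T (((q.1 : ℕ) : ℤ) - ((p.1 : ℕ) : ℤ)) p.2 q.2)
    (h𝒯tilde : ∀ p q : Fin (M+1) × Fin N,
      𝒯tilde p q = Ttilde (((q.1 : ℕ) : ℤ) - ((p.1 : ℕ) : ℤ)) p.2 q.2)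
    (h𝒳 : ∀ p q : Fin (M+1) × Fin N,
      𝒳 p q = if p.1 = q.1 then X ((p.1 : ℕ) : ℤ) p.2 q.2 else 0)
    (h𝒴 : ∀ p q : Fin (M+1) × Fin N,
      𝒴 p q = if p.1 = q.1 then ((1 + X ((p.1 : ℕ) : ℤ))⁻¹ - 1) p.2 q.2 else 0) :
    (1 - 𝒳 * 𝒯).det = (1 + 𝒳).det * (1 - ((ω : ℂ) ^ 2) • (𝒴 * 𝒯tilde)).det ∧
      ((1 - 𝒳 * 𝒯).det = 0 ↔ (1 - ((ω : ℂ) ^ 2) • (𝒴 * 𝒯tilde)).det = 0) := by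
  have hπ : ((π : ℝ) : ℂ) ≠ 0 := Complex.ofReal_ne_zero.2 Real.pi_ne_zero
  set g : ℝ → Matrix (Fin N) (Fin N) ℂ :=
    fun α => C α - ((ω : ℂ) ^ 2) • (1 : Matrix (Fin N) (Fin N) ℂ) with hg_def
  have hg_cont : Continuous g := hC_cont.sub continuous_const
  have hdet : ∀ α, (g α).det ≠ 0 := fun α =>
    ((Matrix.isUnit_iff_isUnit_det _).1 (hω α)).ne_zero
  have hinv_cont : ∀ i j : Fin N, Continuous fun α => (g α)⁻¹ i j := by
    intro i j
    have heq : (fun α => (g α)⁻¹ i j)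
        = fun α => ((g α).det)⁻¹ * (g α).adjugate i j := by
      funext α
      rw [Matrix.inv_def, Ring.inverse_eq_inv']
      simp [Matrix.smul_apply]
    rw [heq]
    exact (hg_cont.matrix_det.inv₀ hdet).mul
      ((continuous_apply j).comp ((continuous_apply i).comp hg_cont.matrix_adjugate))
  -- key identity  T k = -(δ_{k0} + ω² Ttilde k)
  have hkey : ∀ k : ℤ, T k
      = -((if k = 0 then (1 : Matrix (Fin N) (Fin N) ℂ) else 0)
          + ((ω : ℂ) ^ 2) • Ttilde k) := by
    intro k
    ext i j
    have hpt : ∀ α : ℝ, (C α * (g α)⁻¹) i j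
        = (1 : Matrix (Fin N) (Fin N) ℂ) i j + ((ω : ℂ) ^ 2) * (g α)⁻¹ i j := by
      intro α
      have hC' : C α = g α + ((ω : ℂ) ^ 2) • (1 : Matrix (Fin N) (Fin N) ℂ) := by
        simp [hg_def]
      rw [hC', Matrix.add_mul, Matrix.mul_nonsing_inv _ (isUnit_iff_ne_zero.2 (hdet α)),
        Matrix.smul_mul, Matrix.one_mul]
      simp [Matrix.add_apply, Matrix.smul_apply]
    have hint : ∀ α : ℝ,
        Complex.exp (Complex.I * (k : ℂ) * (α : ℂ)) * (C α * (g α)⁻¹) i j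
        = (1 : Matrix (Fin N) (Fin N) ℂ) i j * Complex.exp (Complex.I * (k : ℂ) * (α : ℂ))
          + ((ω : ℂ) ^ 2) *
            (Complex.exp (Complex.I * (k : ℂ) * (α : ℂ)) * (g α)⁻¹ i j) := by
      intro α; rw [hpt α]; ring
    have hexp_cont : Continuous fun α : ℝ =>
        Complex.exp (Complex.I * (k : ℂ) * (α : ℂ)) :=
      Complex.continuous_exp.comp (continuous_const.mul Complex.continuous_ofReal)
    have hI1 : IntervalIntegrable
        (fun α : ℝ => (1 : Matrix (Fin N) (Fin N) ℂ) i j *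
          Complex.exp (Complex.I * (k : ℂ) * (α : ℂ))) MeasureTheory.volume 0 (2 * π) :=
      (continuous_const.mul hexp_cont).intervalIntegrable _ _
    have hI2 : IntervalIntegrable
        (fun α : ℝ => ((ω : ℂ) ^ 2) *
          (Complex.exp (Complex.I * (k : ℂ) * (α : ℂ)) * (g α)⁻¹ i j))
        MeasureTheory.volume 0 (2 * π) :=
      (continuous_const.mul (hexp_cont.mul (hinv_cont i j))).intervalIntegrable _ _
    have hE : (∫ α in (0:ℝ)..(2 * π), Complex.exp (Complex.I * (k : ℂ) * (α : ℂ)))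
        = if k = 0 then ((2 * π : ℝ) : ℂ) else 0 := by
      by_cases hk : k = 0
      · subst hk
        simp only [Int.cast_zero, mul_zero, zero_mul, Complex.exp_zero]
        simp
      · have hc : (Complex.I * (k : ℂ)) ≠ 0 :=
          mul_ne_zero Complex.I_ne_zero (Int.cast_ne_zero.2 hk)
        rw [if_neg hk]
        have := integral_exp_mul_complex (a := 0) (b := 2 * π) hc
        simp only [mul_assoc] at this ⊢
        rw [this]
        have h2 : Complex.I * ((k : ℂ) * ((2 * π : ℝ) : ℂ)) = (k : ℂ) * (2 * (π : ℂ) * Complex.I) := by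
          push_cast; ring
        rw [h2, Complex.exp_int_mul_two_pi_mul_I]
        simp
    rw [hT]
    rw [intervalIntegral.integral_congr (fun α _ => hint α)]
    rw [intervalIntegral.integral_add hI1 hI2, intervalIntegral.integral_const_mul,
      intervalIntegral.integral_const_mul, hE]
    have hrhs : (-((if k = 0 then (1 : Matrix (Fin N) (Fin N) ℂ) else 0)
        + ((ω : ℂ) ^ 2) • Ttilde k)) i j
        = -((if k = 0 then (1 : Matrix (Fin N) (Fin N) ℂ) i j else 0)
            + ((ω : ℂ) ^ 2) * Ttilde k i j) := by
      by_cases hk : k = 0 <;>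
        simp [hk, Matrix.neg_apply, Matrix.add_apply, Matrix.smul_apply, smul_eq_mul]
    rw [hrhs, hTtilde]
    by_cases hk : k = 0
    · simp only [hk, if_pos]
      have h2π : ((2:ℂ) * (π:ℂ)) ≠ 0 := by
        simpa using mul_ne_zero (two_ne_zero) hπ
      push_cast
      field_simp
      rfl
    · simp only [hk, if_neg, if_false]
      push_cast
      ring
  -- block-level identity 𝒯 = -(1 + ω² 𝒯tilde)
  have hTblk : 𝒯 = -(1 + ((ω : ℂ) ^ 2) • 𝒯tilde) := by
    ext ⟨a, i⟩ ⟨b, j⟩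
    rw [h𝒯, hkey]
    have h1 : ((1 : Matrix (Fin (M+1) × Fin N) (Fin (M+1) × Fin N) ℂ)) (a, i) (b, j)
        = if ((b : ℕ) : ℤ) - ((a : ℕ) : ℤ) = 0 then (1 : Matrix (Fin N) (Fin N) ℂ) i j
          else (0 : Matrix (Fin N) (Fin N) ℂ) i j := by
      by_cases hab : a = b
      · subst hab; simp [Matrix.one_apply, Prod.ext_iff]
      · have hne : ((b : ℕ) : ℤ) - ((a : ℕ) : ℤ) ≠ 0 := by
          intro h
          exact hab (Fin.ext (by omega))
        simp [Matrix.one_apply, Prod.ext_iff, hab, hne]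
    simp only [Matrix.neg_apply, Matrix.add_apply, Matrix.smul_apply, h1, h𝒯tilde,
      smul_eq_mul]
    by_cases hz : ((b : ℕ) : ℤ) - ((a : ℕ) : ℤ) = 0 <;> simp [hz]
  -- block diagonal structure
  set F : Fin (M+1) → Matrix (Fin N) (Fin N) ℂ := fun m => X ((m : ℕ) : ℤ) with hF
  have hA : 1 + 𝒳 = stmt16blk (fun m => 1 + F m) := by
    ext ⟨a, i⟩ ⟨b, j⟩
    simp only [Matrix.add_apply, h𝒳, stmt16blk, Matrix.one_apply, Prod.ext_iff, hF,
      Matrix.add_apply]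
    by_cases hab : a = b <;> by_cases hij : i = j <;> simp [hab, hij]
  set B : Matrix (Fin (M+1) × Fin N) (Fin (M+1) × Fin N) ℂ :=
    stmt16blk (fun m => (1 + F m)⁻¹) with hB
  have hFu : ∀ m : Fin (M+1), IsUnit (1 + F m).det :=
    fun m => (Matrix.isUnit_iff_isUnit_det _).1 (hX_inv _)
  have hAB : (1 + 𝒳) * B = 1 := by
    rw [hA, hB, stmt16blk_mul]
    have : (fun m => (1 + F m) * (1 + F m)⁻¹)
        = fun _ : Fin (M+1) => (1 : Matrix (Fin N) (Fin N) ℂ) :=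
      funext fun m => Matrix.mul_nonsing_inv _ (hFu m)
    rw [this, stmt16blk_one]
  have hBA : B * (1 + 𝒳) = 1 := by
    rw [hB, hA, stmt16blk_mul]
    have : (fun m => (1 + F m)⁻¹ * (1 + F m))
        = fun _ : Fin (M+1) => (1 : Matrix (Fin N) (Fin N) ℂ) :=
      funext fun m => Matrix.nonsing_inv_mul _ (hFu m)
    rw [this, stmt16blk_one]
  have hY : 𝒴 = B - 1 := by
    ext ⟨a, i⟩ ⟨b, j⟩
    simp only [h𝒴, Matrix.sub_apply, hB, stmt16blk, Matrix.one_apply, Prod.ext_iff, hF]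
    by_cases hab : a = b <;> by_cases hij : i = j <;>
      simp [hab, hij, Matrix.sub_apply, Matrix.one_apply]
  -- main algebraic identity
  have hmain : 1 - 𝒳 * 𝒯 = (1 + 𝒳) * (1 - ((ω : ℂ) ^ 2) • (𝒴 * 𝒯tilde)) := by
    have hAY : (1 + 𝒳) * 𝒴 = -𝒳 := by
      rw [hY, mul_sub, hAB, mul_one]
      abel
    rw [hTblk]
    rw [mul_sub, mul_one, Matrix.mul_smul, ← mul_assoc, hAY]
    rw [mul_neg, mul_add, mul_one, Matrix.mul_smul, Matrix.neg_mul]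
    module
  have hdetA : (1 + 𝒳).det ≠ 0 := by
    have : (1 + 𝒳).det * B.det = 1 := by
      rw [← Matrix.det_mul, hAB, Matrix.det_one]
    exact left_ne_zero_of_mul_eq_one this
  refine ⟨by rw [hmain, Matrix.det_mul], ?_⟩
  rw [hmain, Matrix.det_mul, mul_eq_zero]
  simp [hdetA]
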